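/- arXiv:quant-ph/0505091 — 2 statements merged into one kernel-verified Lean document; each statement's English description precedes it below -/
import Mathlib

section
/- For every three-qubit pure state ψ, the matrices R(ρ_AB) and R(ρ_AS) each have at most two nonzero eigenvalues (λ₃ = λ₄ = 0), and C_a(ρ_AB)² + C_a(ρ_AS)² − 4·det ρ_A = 2(λ₁^{AB} λ₂^{AB} + λ₁^{AS} λ₂^{AS}), where λ₁^{AB} ≥ λ₂^{AB} and λ₁^{AS} ≥ λ₂^{AS} are the two largest eigenvalues of R(ρ_AB) and R(ρ_AS) respectively. -/
open Matrix Complex Kronecker Finset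
open scoped ComplexOrder

noncomputable section

abbrev TwoQubitMat := Matrix (Fin 2 × Fin 2) (Fin 2 × Fin 2) ℂ

def sigmaY : Matrix (Fin 2) (Fin 2) ℂ := !![0, -Complex.I; Complex.I, 0]

def spinFlip (ρ : TwoQubitMat) : TwoQubitMat :=
  (sigmaY ⊗ₖ sigmaY) * ρ.map (starRingEnd ℂ) * (sigmaY ⊗ₖ sigmaY)

def matSqrt {m : Type*} [Fintype m] [DecidableEq m] (M : Matrix m m ℂ) : Matrix m m ℂ :=
  open scoped Classical in
  if h : M.PosSemidef then (h.1.eigenvectorUnitary : Matrix m m ℂ) *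
    diagonal ((↑) ∘ Real.sqrt ∘ h.1.eigenvalues) * (star h.1.eigenvectorUnitary : Matrix m m ℂ) else 0

def Rmat (ρ : TwoQubitMat) : TwoQubitMat :=
  matSqrt (matSqrt ρ * spinFlip ρ * matSqrt ρ)

def CoA (ρ : TwoQubitMat) : ℝ := (Rmat ρ).trace.re

def lmin2 (M : Matrix (Fin 2) (Fin 2) ℂ) : ℝ :=
  if h : M.IsHermitian then min (h.eigenvalues 0) (h.eigenvalues 1) else 0

def maxEig4 (M : TwoQubitMat) : ℝ :=
  if h : M.IsHermitian then Finset.univ.sup' Finset.univ_nonempty h.eigenvalues else 0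

def Conc (ρ : TwoQubitMat) : ℝ := max 0 (2 * maxEig4 (Rmat ρ) - (Rmat ρ).trace.re)

def eigMultiset (M : TwoQubitMat) : Multiset ℝ :=
  if h : M.IsHermitian then Finset.univ.val.map h.eigenvalues else 0

def rhoAB (ψ : Fin 2 → Fin 2 → Fin 2 → ℂ) : TwoQubitMat :=
  fun p q => ∑ l, ψ p.1 p.2 l * (starRingEnd ℂ) (ψ q.1 q.2 l)

def rhoAS (ψ : Fin 2 → Fin 2 → Fin 2 → ℂ) : TwoQubitMat :=
  fun p q => ∑ j, ψ p.1 j p.2 * (starRingEnd ℂ) (ψ q.1 j q.2)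

def rhoA (ψ : Fin 2 → Fin 2 → Fin 2 → ℂ) : Matrix (Fin 2) (Fin 2) ℂ :=
  fun i i' => ∑ j, ∑ l, ψ i j l * (starRingEnd ℂ) (ψ i' j l)


/-! ### Auxiliary lemmas -/

private lemma matSqrt_spec {m : Type*} [Fintype m] [DecidableEq m] {M : Matrix m m ℂ}
    (h : M.PosSemidef) : (matSqrt M).PosSemidef ∧ matSqrt M * matSqrt M = M := by
  rw [matSqrt, dif_pos h]
  set U : Matrix m m ℂ := (h.1.eigenvectorUnitary : Matrix m m ℂ) with hU
  have hV : star U * U = 1 := mem_unitaryGroup_iff'.mp h.1.eigenvectorUnitary.2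
  constructor
  · have hD : (diagonal ((↑) ∘ Real.sqrt ∘ h.1.eigenvalues) : Matrix m m ℂ).PosSemidef :=
      posSemidef_diagonal_iff.mpr (fun i => by
        simp only [Function.comp]
        exact Complex.zero_le_real.mpr (Real.sqrt_nonneg _))
    have := hD.mul_mul_conjTranspose_same U
    rwa [← star_eq_conjTranspose] at this
  · have hsp : M = U * diagonal (RCLike.ofReal ∘ h.1.eigenvalues) * star U := h.1.spectral_theorem
    calc U * diagonal ((↑) ∘ Real.sqrt ∘ h.1.eigenvalues) * star U *
          (U * diagonal ((↑) ∘ Real.sqrt ∘ h.1.eigenvalues) * star U)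
        = U * (diagonal ((↑) ∘ Real.sqrt ∘ h.1.eigenvalues) * (star U * U) *
            diagonal ((↑) ∘ Real.sqrt ∘ h.1.eigenvalues)) * star U := by
          simp only [Matrix.mul_assoc]
      _ = M := by
          rw [hV, Matrix.mul_one, diagonal_mul_diagonal]
          refine Eq.trans ?_ hsp.symm
          congr 2
          congr 1
          funext i
          simp only [Function.comp]
          rw [← Complex.ofReal_mul, Real.mul_self_sqrt (h.eigenvalues_nonneg i)]
          rfl

private lemma sh12 (x y : ℝ) : ({(0:ℝ), 0, x, y} : Multiset ℝ) = {x, y, 0, 0} := by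
  simp only [Multiset.insert_eq_cons, ← Multiset.cons_zero (α := ℝ)]
  rw [Multiset.cons_swap (0:ℝ) x, Multiset.cons_swap (0:ℝ) x, Multiset.cons_swap (0:ℝ) y,
      Multiset.cons_swap (0:ℝ) y]

private lemma sh13 (x y : ℝ) : ({(0:ℝ), x, 0, y} : Multiset ℝ) = {x, y, 0, 0} := by
  simp only [Multiset.insert_eq_cons, ← Multiset.cons_zero (α := ℝ)]
  rw [Multiset.cons_swap (0:ℝ) x, Multiset.cons_swap (0:ℝ) y, Multiset.cons_swap (0:ℝ) y]

private lemma sh14 (x y : ℝ) : ({(0:ℝ), x, y, 0} : Multiset ℝ) = {x, y, 0, 0} := by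
  simp only [Multiset.insert_eq_cons, ← Multiset.cons_zero (α := ℝ)]
  rw [Multiset.cons_swap (0:ℝ) x, Multiset.cons_swap (0:ℝ) y]

private lemma sh23 (x y : ℝ) : ({x, (0:ℝ), 0, y} : Multiset ℝ) = {x, y, 0, 0} := by
  simp only [Multiset.insert_eq_cons, ← Multiset.cons_zero (α := ℝ)]
  rw [Multiset.cons_swap (0:ℝ) y, Multiset.cons_swap (0:ℝ) y]

private lemma sh24 (x y : ℝ) : ({x, (0:ℝ), y, 0} : Multiset ℝ) = {x, y, 0, 0} := by
  simp only [Multiset.insert_eq_cons, ← Multiset.cons_zero (α := ℝ)]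
  rw [Multiset.cons_swap (0:ℝ) y]

private lemma key_pair (x y : ℝ) (hx : 0 ≤ x) (hy : 0 ≤ y) :
    ∃ a b : ℝ, a ≥ b ∧ b ≥ 0 ∧ ({x, y, 0, 0} : Multiset ℝ) = {a, b, 0, 0} ∧
      a + b = x + y ∧ a ^ 2 + b ^ 2 = x ^ 2 + y ^ 2 := by
  rcases le_total y x with h | h
  · exact ⟨x, y, h, hy, rfl, rfl, rfl⟩
  · refine ⟨y, x, h, hx, ?_, by ring, by ring⟩
    simp only [Multiset.insert_eq_cons]
    rw [Multiset.cons_swap]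

private lemma eig_pair (w x y z : ℝ) (hw : 0 ≤ w) (hx : 0 ≤ x) (hy : 0 ≤ y) (hz : 0 ≤ z)
    (h : (w = 0 ∧ x = 0) ∨ (w = 0 ∧ y = 0) ∨ (w = 0 ∧ z = 0) ∨ (x = 0 ∧ y = 0) ∨
      (x = 0 ∧ z = 0) ∨ (y = 0 ∧ z = 0)) :
    ∃ a b : ℝ, a ≥ b ∧ b ≥ 0 ∧ ({w, x, y, z} : Multiset ℝ) = {a, b, 0, 0} ∧
      a + b = w + x + y + z ∧ a ^ 2 + b ^ 2 = w ^ 2 + x ^ 2 + y ^ 2 + z ^ 2 := by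
  rcases h with ⟨h1, h2⟩ | ⟨h1, h2⟩ | ⟨h1, h2⟩ | ⟨h1, h2⟩ | ⟨h1, h2⟩ | ⟨h1, h2⟩ <;> subst h1 <;>
    subst h2
  · obtain ⟨a, b, h1, h2, h3, h4, h5⟩ := key_pair y z hy hz
    exact ⟨a, b, h1, h2, (sh12 y z).trans h3, by linarith, by linarith [h5]⟩
  · obtain ⟨a, b, h1, h2, h3, h4, h5⟩ := key_pair x z hx hz
    exact ⟨a, b, h1, h2, (sh13 x z).trans h3, by linarith, by linarith [h5]⟩
  · obtain ⟨a, b, h1, h2, h3, h4, h5⟩ := key_pair x y hx hy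
    exact ⟨a, b, h1, h2, (sh14 x y).trans h3, by linarith, by linarith [h5]⟩
  · obtain ⟨a, b, h1, h2, h3, h4, h5⟩ := key_pair w z hw hz
    exact ⟨a, b, h1, h2, (sh23 w z).trans h3, by linarith, by linarith [h5]⟩
  · obtain ⟨a, b, h1, h2, h3, h4, h5⟩ := key_pair w y hw hy
    exact ⟨a, b, h1, h2, (sh24 w y).trans h3, by linarith, by linarith [h5]⟩
  · obtain ⟨a, b, h1, h2, h3, h4, h5⟩ := key_pair w x hw hx
    exact ⟨a, b, h1, h2, h3, by linarith, by linarith [h5]⟩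

private lemma trace_eq_sum_eigen {A : TwoQubitMat} (hA : A.IsHermitian) :
    A.trace = ∑ i, (hA.eigenvalues i : ℂ) := by
  have hV := mem_unitaryGroup_iff'.mp hA.eigenvectorUnitary.2
  conv_lhs => rw [hA.spectral_theorem]
  rw [Unitary.conjStarAlgAut_apply]
  rw [trace_mul_cycle, hV, one_mul, trace_diagonal]
  simp [Function.comp]

private lemma trace_sq_eq_sum_eigen {A : TwoQubitMat} (hA : A.IsHermitian) :
    (A * A).trace = ∑ i, ((hA.eigenvalues i : ℂ)) ^ 2 := by
  set V : TwoQubitMat := (hA.eigenvectorUnitary : TwoQubitMat) with hVdef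
  set D : TwoQubitMat := diagonal (RCLike.ofReal ∘ hA.eigenvalues) with hDdef
  have hV : star V * V = 1 := mem_unitaryGroup_iff'.mp hA.eigenvectorUnitary.2
  have h1 : A = V * D * star V := hA.spectral_theorem
  have h2 : A * A = V * (D * D) * star V := by
    rw [h1]
    simp only [Matrix.mul_assoc]
    rw [show star V * (V * (D * star V)) = D * star V by rw [← Matrix.mul_assoc, hV, one_mul]]
  rw [h2, trace_mul_cycle, hV, one_mul, hDdef, diagonal_mul_diagonal, trace_diagonal]
  simp [Function.comp, pow_two]

private lemma main_aux (ρ : TwoQubitMat) (M : Matrix (Fin 2 × Fin 2) (Fin 2) ℂ)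
    (hM : ρ = M * Mᴴ) :
    ∃ a b : ℝ, a ≥ b ∧ b ≥ 0 ∧ eigMultiset (Rmat ρ) = {a, b, 0, 0} ∧
      CoA ρ = a + b ∧ a ^ 2 + b ^ 2 = (ρ * spinFlip ρ).trace.re := by
  have hρ : ρ.PosSemidef := hM ▸ posSemidef_self_mul_conjTranspose M
  have hs := matSqrt_spec hρ
  have hsPSD : (matSqrt ρ).PosSemidef := hs.1
  have hss : matSqrt ρ * matSqrt ρ = ρ := hs.2
  have hSh : (sigmaY ⊗ₖ sigmaY)ᴴ = sigmaY ⊗ₖ sigmaY := by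
    ext ⟨a, b⟩ ⟨c, d⟩
    fin_cases a <;> fin_cases b <;> fin_cases c <;> fin_cases d <;>
      simp [sigmaY, conjTranspose_apply, kroneckerMap_apply]
  have hmap : ρ.map (starRingEnd ℂ) = ρᵀ := by
    ext p q
    have h := congrFun (congrFun hρ.1 q) p
    simpa [conjTranspose_apply] using h
  have hflip : (spinFlip ρ).PosSemidef := by
    rw [spinFlip, hmap]
    have := (hρ.transpose).mul_mul_conjTranspose_same (sigmaY ⊗ₖ sigmaY)
    rwa [hSh] at this
  have hA : (matSqrt ρ * spinFlip ρ * matSqrt ρ).PosSemidef := by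
    have := hflip.mul_mul_conjTranspose_same (matSqrt ρ)
    rwa [hsPSD.1.eq] at this
  have hRdef := matSqrt_spec hA
  have hR : (Rmat ρ).PosSemidef := hRdef.1
  have hRR : Rmat ρ * Rmat ρ = matSqrt ρ * spinFlip ρ * matSqrt ρ := by
    exact hRdef.2
  have hr1 : ρ.rank ≤ 2 := by
    rw [hM]
    exact le_trans (rank_mul_le_left M Mᴴ) (by simpa using rank_le_card_width M)
  have hr2 : (matSqrt ρ).rank = ρ.rank := by
    conv_lhs => rw [← rank_conjTranspose_mul_self (matSqrt ρ)]
    rw [hsPSD.1.eq, hss]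
  have hr3 : (Rmat ρ).rank ≤ 2 := by
    rw [← rank_conjTranspose_mul_self (Rmat ρ), hR.1.eq, hRR]
    exact le_trans (rank_mul_le_left _ _) (le_trans (rank_mul_le_left _ _) (hr2 ▸ hr1))
  set e := hR.1.eigenvalues with he
  have hnn : ∀ i, 0 ≤ e i := hR.eigenvalues_nonneg
  have hcard : Fintype.card {i // e i ≠ 0} ≤ 2 := by
    rw [← hR.1.rank_eq_card_non_zero_eigs]; exact hr3
  have hcard0 : 1 < Fintype.card {i // e i = 0} := by
    have h1 : Fintype.card {i : Fin 2 × Fin 2 // ¬ e i = 0} =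
        Fintype.card (Fin 2 × Fin 2) - Fintype.card {i // e i = 0} :=
      Fintype.card_subtype_compl _
    have h2 : Fintype.card (Fin 2 × Fin 2) = 4 := by simp
    have h3 : Fintype.card {i : Fin 2 × Fin 2 // e i = 0} ≤ 4 := by
      simpa using Fintype.card_subtype_le (fun i => e i = 0)
    have h4 : Fintype.card {i : Fin 2 × Fin 2 // ¬ e i = 0} ≤ 2 := hcard
    omega
  obtain ⟨⟨i, hi⟩, ⟨j, hj⟩, hij⟩ := Fintype.exists_pair_of_one_lt_card hcard0
  obtain ⟨i1, i2⟩ := i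
  obtain ⟨j1, j2⟩ := j
  have hij' : (i1, i2) ≠ (j1, j2) := fun h => hij (Subtype.ext h)
  have hdisj : (e (0,0) = 0 ∧ e (0,1) = 0) ∨ (e (0,0) = 0 ∧ e (1,0) = 0) ∨
      (e (0,0) = 0 ∧ e (1,1) = 0) ∨ (e (0,1) = 0 ∧ e (1,0) = 0) ∨
      (e (0,1) = 0 ∧ e (1,1) = 0) ∨ (e (1,0) = 0 ∧ e (1,1) = 0) := by
    have h2 : ∀ x : Fin 2, x = 0 ∨ x = 1 := by decide
    rcases h2 i1 with rfl | rfl <;> rcases h2 i2 with rfl | rfl <;>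
      rcases h2 j1 with rfl | rfl <;> rcases h2 j2 with rfl | rfl <;>
      first
        | exact absurd rfl hij'
        | tauto
  obtain ⟨a, b, hab, hb0, hmul, hsum, hsq⟩ :=
    eig_pair (e (0,0)) (e (0,1)) (e (1,0)) (e (1,1))
      (hnn _) (hnn _) (hnn _) (hnn _) hdisj
  have hmul' : eigMultiset (Rmat ρ) = {a, b, 0, 0} := by
    rw [eigMultiset, dif_pos hR.1]
    rw [show (Finset.univ.val.map hR.1.eigenvalues : Multiset ℝ) =
      {e (0,0), e (0,1), e (1,0), e (1,1)} from rfl]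
    exact hmul
  have hesum : ∑ i, e i = e (0,0) + e (0,1) + e (1,0) + e (1,1) := by
    rw [Fintype.sum_prod_type]
    simp [Fin.sum_univ_two]
    ring
  have htr : CoA ρ = a + b := by
    rw [CoA, trace_eq_sum_eigen hR.1]
    rw [show ∑ i, ((hR.1.eigenvalues i : ℂ)) = ((∑ i, e i : ℝ) : ℂ) by
      rw [Complex.ofReal_sum]]
    rw [Complex.ofReal_re, hesum, hsum]
  have htr2 : a ^ 2 + b ^ 2 = (ρ * spinFlip ρ).trace.re := by
    have h1 : (ρ * spinFlip ρ).trace = (Rmat ρ * Rmat ρ).trace := by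
      rw [hRR, trace_mul_cycle, hss]
    rw [h1, trace_sq_eq_sum_eigen hR.1]
    rw [show ∑ i, ((hR.1.eigenvalues i : ℂ)) ^ 2 = ((∑ i, e i ^ 2 : ℝ) : ℂ) by
      push_cast; rfl]
    rw [Complex.ofReal_re]
    rw [show ∑ i, e i ^ 2 = e (0,0) ^ 2 + e (0,1) ^ 2 + e (1,0) ^ 2 + e (1,1) ^ 2 by
      rw [Fintype.sum_prod_type]; simp [Fin.sum_univ_two]; ring]
    exact hsq
  exact ⟨a, b, hab, hb0, hmul', htr, htr2⟩

private def nn : Fin 2 → Fin 2 | 0 => 1 | 1 => 0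

private lemma spinFlip_apply (ρ : TwoQubitMat) (p q : Fin 2 × Fin 2) :
    spinFlip ρ p q = (-1 : ℂ) ^ (p.1.val + p.2.val + q.1.val + q.2.val) *
      (starRingEnd ℂ) (ρ (nn p.1, nn p.2) (nn q.1, nn q.2)) := by
  obtain ⟨p1, p2⟩ := p
  obtain ⟨q1, q2⟩ := q
  fin_cases p1 <;> fin_cases p2 <;> fin_cases q1 <;> fin_cases q2 <;>
    · simp [spinFlip, mul_apply, sigmaY, kroneckerMap_apply, Fintype.sum_prod_type,
        Fin.sum_univ_two, nn, Matrix.map_apply]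
      try norm_num

set_option maxHeartbeats 1000000 in
private lemma trace_id (ψ : Fin 2 → Fin 2 → Fin 2 → ℂ) :
    (rhoAB ψ * spinFlip (rhoAB ψ)).trace + (rhoAS ψ * spinFlip (rhoAS ψ)).trace
      = 4 * (rhoA ψ).det := by
  simp only [Matrix.trace, Matrix.diag, mul_apply, spinFlip_apply, rhoAB, rhoAS, rhoA,
    det_fin_two, Fintype.sum_prod_type, Fin.sum_univ_two, nn, map_sum, _root_.map_mul,
    Complex.conj_conj]
  norm_num
  ring

theorem CoA_eigenvalue_identity (ψ : Fin 2 → Fin 2 → Fin 2 → ℂ)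
    (hψ : ∑ i, ∑ j, ∑ l, Complex.normSq (ψ i j l) = 1) :
    ∃ lAB₁ lAB₂ lAS₁ lAS₂ : ℝ,
      lAB₁ ≥ lAB₂ ∧ lAB₂ ≥ 0 ∧ lAS₁ ≥ lAS₂ ∧ lAS₂ ≥ 0 ∧
      eigMultiset (Rmat (rhoAB ψ)) = {lAB₁, lAB₂, 0, 0} ∧
      eigMultiset (Rmat (rhoAS ψ)) = {lAS₁, lAS₂, 0, 0} ∧
      CoA (rhoAB ψ) ^ 2 + CoA (rhoAS ψ) ^ 2 - 4 * (rhoA ψ).det.re =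
        2 * (lAB₁ * lAB₂ + lAS₁ * lAS₂) := by
  have hAB : rhoAB ψ = (Matrix.of fun (p : Fin 2 × Fin 2) (l : Fin 2) => ψ p.1 p.2 l) *
      (Matrix.of fun (p : Fin 2 × Fin 2) (l : Fin 2) => ψ p.1 p.2 l)ᴴ := by
    ext p q
    simp [rhoAB, mul_apply, conjTranspose_apply]
  have hAS : rhoAS ψ = (Matrix.of fun (p : Fin 2 × Fin 2) (j : Fin 2) => ψ p.1 j p.2) *
      (Matrix.of fun (p : Fin 2 × Fin 2) (j : Fin 2) => ψ p.1 j p.2)ᴴ := by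
    ext p q
    simp [rhoAS, mul_apply, conjTranspose_apply]
  obtain ⟨a, b, hab, hb0, hmAB, hcAB, hsAB⟩ := main_aux (rhoAB ψ) _ hAB
  obtain ⟨c, d, hcd, hd0, hmAS, hcAS, hsAS⟩ := main_aux (rhoAS ψ) _ hAS
  refine ⟨a, b, c, d, hab, hb0, hcd, hd0, hmAB, hmAS, ?_⟩
  have hti : (rhoAB ψ * spinFlip (rhoAB ψ)).trace.re + (rhoAS ψ * spinFlip (rhoAS ψ)).trace.re
      = 4 * (rhoA ψ).det.re := by
    have := congrArg Complex.re (trace_id ψ)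
    simpa [Complex.add_re, Complex.mul_re] using this
  rw [hcAB, hcAS]
  nlinarith [hsAB, hsAS, hti]
end
end

section
/- Let a, b, c be nonnegative reals with a + b + c = 1 and let ψ be the W-class three-qubit state ψ = √a·|100⟩ + √b·|010⟩ + √c·|001⟩ (i.e. ψ 1 0 0 = √a, ψ 0 1 0 = √b, ψ 0 0 1 = √c, all other amplitudes zero). Then the concurrence of assistance with respect to the party holding the third qubit is Tr R(ρ_AB) = 2√(a·b), and the concurrence of assistance with respect to the party holding the first qubit is Tr R(ρ_BS) = 2√(b·c), where ρ_AB is the reduced state of qubits 1,2 and ρ_BS is the reduced state of qubits 2,3. -/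
open Matrix Complex Kronecker Finset
open scoped ComplexOrder

noncomputable section

def rhoBS (ψ : Fin 2 → Fin 2 → Fin 2 → ℂ) : TwoQubitMat :=
  fun p q => ∑ i, ψ i p.1 p.2 * (starRingEnd ℂ) (ψ i q.1 q.2)

/-- The W-class state `√a|100⟩ + √b|010⟩ + √c|001⟩`. -/
def psiW (a b c : ℝ) : Fin 2 → Fin 2 → Fin 2 → ℂ := fun i j l =>
  if i = 1 ∧ j = 0 ∧ l = 0 then (Real.sqrt a : ℂ)
  else if i = 0 ∧ j = 1 ∧ l = 0 then (Real.sqrt b : ℂ)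
  else if i = 0 ∧ j = 0 ∧ l = 1 then (Real.sqrt c : ℂ)
  else 0

namespace WAux

/-- outer product of two real vectors as a complex matrix -/
def op (v u : Fin 2 × Fin 2 → ℝ) : TwoQubitMat := fun p q => ((v p * u q : ℝ) : ℂ)

lemma op_mul_op (v u v' u' : Fin 2 × Fin 2 → ℝ) :
    op v u * op v' u' = ((∑ s, u s * v' s : ℝ) : ℂ) • op v u' := by
  ext p q
  simp only [op, Matrix.mul_apply, Matrix.smul_apply, smul_eq_mul]
  push_cast
  rw [Finset.sum_mul]
  exact Finset.sum_congr rfl fun s _ => by ring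

lemma op_self_posSemidef (v : Fin 2 × Fin 2 → ℝ) : (op v v).PosSemidef := by
  refine Matrix.PosSemidef.of_dotProduct_mulVec_nonneg ?_ ?_
  · ext p q
    simp [op, Matrix.conjTranspose_apply, mul_comm]
  · intro x
    have h : star x ⬝ᵥ (op v v) *ᵥ x
        = star (∑ s, (v s : ℂ) * x s) * (∑ s, (v s : ℂ) * x s) := by
      simp only [dotProduct, Matrix.mulVec, op, star_sum, star_mul', Finset.sum_mul,
        Finset.mul_sum, Pi.star_apply]
      rw [Finset.sum_comm]
      refine Finset.sum_congr rfl fun p _ => Finset.sum_congr rfl fun q _ => ?_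
      push_cast
      simp [Complex.star_def, Complex.conj_ofReal]
      ring
    rw [h]
    exact star_mul_self_nonneg _

lemma smul_posSemidef {c : ℝ} (hc : 0 ≤ c) {M : TwoQubitMat} (hM : M.PosSemidef) :
    ((c : ℂ) • M).PosSemidef := by
  refine Matrix.PosSemidef.of_dotProduct_mulVec_nonneg ?_ ?_
  · rw [Matrix.IsHermitian, Matrix.conjTranspose_smul, hM.1.eq]
    congr 1
    simp [Complex.conj_ofReal]
  · intro x
    rw [Matrix.smul_mulVec, dotProduct_smul]
    exact mul_nonneg (Complex.zero_le_real.mpr hc) (hM.dotProduct_mulVec_nonneg x)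

lemma add_posSemidef {M N : TwoQubitMat} (hM : M.PosSemidef) (hN : N.PosSemidef) :
    (M + N).PosSemidef := by
  refine Matrix.PosSemidef.of_dotProduct_mulVec_nonneg ?_ ?_
  · exact hM.1.add hN.1
  · intro x
    rw [Matrix.add_mulVec, dotProduct_add]
    exact add_nonneg (hM.dotProduct_mulVec_nonneg x) (hN.dotProduct_mulVec_nonneg x)

lemma matSqrt_eq {M Q : TwoQubitMat} (hM : M.PosSemidef) (hQ : Q.PosSemidef)
    (h : Q * Q = M) : matSqrt M = Q := by
  open scoped MatrixOrder in
  have key : matSqrt M = CFC.sqrt M := by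
    rw [matSqrt, dif_pos hM, CFC.sqrt_eq_real_sqrt M hM.nonneg, cfcₙ_eq_cfc, hM.1.cfc_eq]
    simp [IsHermitian.cfc]
  open scoped MatrixOrder in
  rw [key, CFC.sqrt_eq_iff M Q hM.nonneg hQ.nonneg]
  exact h

def i00 : Fin 2 × Fin 2 → ℝ := fun p => if p = (0,0) then 1 else 0
def i11 : Fin 2 × Fin 2 → ℝ := fun p => if p = (1,1) then 1 else 0
def vv (x y : ℝ) : Fin 2 × Fin 2 → ℝ :=
  fun p => if p = (1,0) then x else if p = (0,1) then y else 0

def ρW (x y z : ℝ) : TwoQubitMat :=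
  ((z^2 : ℝ) : ℂ) • op i00 i00 + op (vv x y) (vv x y)

-- product scalar computations
lemma sum_i00_i00 : (∑ s, i00 s * i00 s) = 1 := by
  simp [i00, Prod.ext_iff, Fintype.sum_prod_type, Fin.sum_univ_two]

lemma sum_i00_i11 : (∑ s, i00 s * i11 s) = 0 := by
  simp [i00, i11, Prod.ext_iff, Fintype.sum_prod_type, Fin.sum_univ_two]

lemma sum_i00_vv (x y : ℝ) : (∑ s, i00 s * vv x y s) = 0 := by
  simp [i00, vv, Prod.ext_iff, Fintype.sum_prod_type, Fin.sum_univ_two]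

lemma sum_vv_i00 (x y : ℝ) : (∑ s, vv x y s * i00 s) = 0 := by
  simp [i00, vv, Prod.ext_iff, Fintype.sum_prod_type, Fin.sum_univ_two]

lemma sum_vv_i11 (x y : ℝ) : (∑ s, vv x y s * i11 s) = 0 := by
  simp [i11, vv, Prod.ext_iff, Fintype.sum_prod_type, Fin.sum_univ_two]

lemma sum_i11_vv (x y : ℝ) : (∑ s, i11 s * vv x y s) = 0 := by
  simp [i11, vv, Prod.ext_iff, Fintype.sum_prod_type, Fin.sum_univ_two]

lemma sum_vv_vv (x y x' y' : ℝ) : (∑ s, vv x y s * vv x' y' s) = x * x' + y * y' := by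
  simp [vv, Prod.ext_iff, Fintype.sum_prod_type, Fin.sum_univ_two]
  ring

lemma spinFlip_ρW (x y z : ℝ) :
    spinFlip (ρW x y z) = ((z^2 : ℝ) : ℂ) • op i11 i11 + op (vv y x) (vv y x) := by
  have hmap : (ρW x y z).map (starRingEnd ℂ) = ρW x y z := by
    ext p q
    simp [ρW, op, Matrix.map_apply, Matrix.add_apply, Matrix.smul_apply,
      Complex.conj_ofReal]
  rw [spinFlip, hmap]
  ext ⟨i, j⟩ ⟨k, l⟩
  fin_cases i <;> fin_cases j <;> fin_cases k <;> fin_cases l <;>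
    simp [Matrix.mul_apply, Fintype.sum_prod_type, Fin.sum_univ_two,
      kroneckerMap_apply, sigmaY, ρW, op, vv, i00, i11, Matrix.add_apply,
      Matrix.smul_apply, Matrix.of_apply, Matrix.cons_val_zero, Matrix.cons_val_one,
      Matrix.head_cons, Prod.mk.injEq, Prod.ext_iff] <;> ring_nf


lemma ρW_posSemidef (x y z : ℝ) : (ρW x y z).PosSemidef :=
  add_posSemidef (smul_posSemidef (sq_nonneg z) (op_self_posSemidef i00))
    (op_self_posSemidef (vv x y))

lemma trace_ρW_key (x y z : ℝ) (hx : 0 ≤ x) (hy : 0 ≤ y) (hz : 0 ≤ z) :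
    (Rmat (ρW x y z)).trace = ((2 * x * y : ℝ) : ℂ) := by
  set B : TwoQubitMat := op (vv x y) (vv x y) with hB
  set E00 : TwoQubitMat := op i00 i00 with hE00
  set E11 : TwoQubitMat := op i11 i11 with hE11
  have hBB : B * B = ((x^2 + y^2 : ℝ) : ℂ) • B := by
    rw [hB, op_mul_op, sum_vv_vv]
    congr 1; push_cast; ring
  have hE00B : E00 * B = 0 := by
    rw [hE00, hB, op_mul_op, sum_i00_vv]; simp
  have hBE00 : B * E00 = 0 := by
    rw [hE00, hB, op_mul_op, sum_vv_i00]; simp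
  have hE00E00 : E00 * E00 = E00 := by
    rw [hE00, op_mul_op, sum_i00_i00]; simp
  have hE00E11 : E00 * E11 = 0 := by
    rw [hE00, hE11, op_mul_op, sum_i00_i11]; simp
  have hBpsd : B.PosSemidef := op_self_posSemidef _
  have hρpsd := ρW_posSemidef x y z
  have hflip := spinFlip_ρW x y z
  rcases eq_or_ne (x^2 + y^2) 0 with hr | hr
  · -- degenerate case x = y = 0
    have hx0 : x = 0 := by nlinarith [sq_nonneg x, sq_nonneg y]
    have hy0 : y = 0 := by nlinarith [sq_nonneg x, sq_nonneg y]
    subst hx0; subst hy0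
    have hB0 : B = 0 := by
      ext p q; simp [hB, op, vv]
    have hρ : ρW 0 0 z = ((z^2 : ℝ) : ℂ) • E00 := by rw [ρW, ← hB, hB0, add_zero, hE00]
    have hQ : matSqrt (ρW 0 0 z) = ((z : ℝ) : ℂ) • E00 := by
      apply matSqrt_eq hρpsd (smul_posSemidef hz (op_self_posSemidef _))
      rw [hρ, Matrix.smul_mul, Matrix.mul_smul, hE00E00, smul_smul]
      congr 1; push_cast; ring
    have hM : (((z:ℝ):ℂ) • E00) * spinFlip (ρW 0 0 z) * (((z:ℝ):ℂ) • E00) = 0 := by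
      rw [hflip]
      have hB'0 : op (vv 0 0) (vv 0 0) = 0 := by
        ext p q; simp [op, vv]
      rw [hB'0, add_zero, ← hE11]
      simp only [Matrix.smul_mul, Matrix.mul_smul, hE00E11, smul_zero, Matrix.zero_mul]
    rw [Rmat, hQ, hM, matSqrt_eq Matrix.PosSemidef.zero Matrix.PosSemidef.zero (by simp)]
    simp
  · -- main case
    set r : ℝ := x^2 + y^2 with hrdef
    have hrpos : 0 < r := lt_of_le_of_ne (by positivity) (Ne.symm hr)
    set w : ℝ := Real.sqrt r with hwdef
    have hwpos : 0 < w := Real.sqrt_pos.mpr hrpos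
    have hw2 : w^2 = r := Real.sq_sqrt hrpos.le
    set Q : TwoQubitMat := ((z : ℝ) : ℂ) • E00 + ((w⁻¹ : ℝ) : ℂ) • B with hQdef
    have hQpsd : Q.PosSemidef :=
      add_posSemidef (smul_posSemidef hz (op_self_posSemidef _))
        (smul_posSemidef (by positivity) hBpsd)
    have hQ2 : Q * Q = ρW x y z := by
      rw [hQdef, add_mul, mul_add, mul_add]
      simp only [Matrix.smul_mul, Matrix.mul_smul, hE00E00, hE00B, hBE00, hBB,
        smul_zero, add_zero, zero_add, smul_smul]
      rw [ρW, ← hB, ← hE00]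
      congr 1
      · congr 1; push_cast; ring
      · have : ((w⁻¹ : ℝ) : ℂ) * (((w⁻¹ : ℝ) : ℂ) * ((x^2 + y^2 : ℝ) : ℂ)) = 1 := by
          rw [← hrdef, ← hw2]
          push_cast
          field_simp
        rw [this, one_smul]
    have hQsqrt : matSqrt (ρW x y z) = Q := matSqrt_eq hρpsd hQpsd hQ2
    -- compute M = Q * flip * Q
    have hM : Q * spinFlip (ρW x y z) * Q = ((4 * x^2 * y^2 / r : ℝ) : ℂ) • B := by
      rw [hflip, hQdef]
      have h1 : E00 * E11 = 0 := hE00E11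
      have h2 : E00 * op (vv y x) (vv y x) = 0 := by
        rw [hE00, op_mul_op, sum_i00_vv]; simp
      have h3 : B * E11 = 0 := by
        rw [hB, hE11, op_mul_op, sum_vv_i11]; simp
      have h4 : B * op (vv y x) (vv y x) = ((2 * x * y : ℝ) : ℂ) • op (vv x y) (vv y x) := by
        rw [hB, op_mul_op, sum_vv_vv]
        congr 1; push_cast; ring
      have h5 : op (vv x y) (vv y x) * E00 = 0 := by
        rw [hE00, op_mul_op, sum_vv_i00]; simp
      have h6 : op (vv x y) (vv y x) * B = ((2 * x * y : ℝ) : ℂ) • B := by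
        rw [hB, op_mul_op, sum_vv_vv]
        congr 1; push_cast; ring
      rw [← hE11]
      simp only [add_mul, mul_add, Matrix.smul_mul, Matrix.mul_smul, h1, h2, h3, h4, h5, h6,
        smul_zero, zero_add, add_zero, Matrix.zero_mul, Matrix.mul_zero, smul_add, smul_smul]
      congr 1
      have hwC : (w : ℂ) ≠ 0 := by exact_mod_cast hwpos.ne'
      have hw2C : (w : ℂ) * w = (x : ℂ)^2 + (y : ℂ)^2 := by
        exact_mod_cast (by rw [← hrdef, ← hw2]; ring : w * w = x^2 + y^2)
      have hsum : ((x : ℂ)^2 + (y : ℂ)^2) ≠ 0 := by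
        have h' := hr; rw [hrdef] at h'; exact_mod_cast h'
      rw [hrdef]
      push_cast
      field_simp
      linear_combination ((-4) * (x:ℂ)^2 * (y:ℂ)^2) * hw2C
    have hMpsd : (((4 * x^2 * y^2 / r : ℝ) : ℂ) • B).PosSemidef :=
      smul_posSemidef (div_nonneg (by positivity) hrpos.le) hBpsd
    have hRcpsd : (((2 * x * y / r : ℝ) : ℂ) • B).PosSemidef :=
      smul_posSemidef (div_nonneg (by positivity) hrpos.le) hBpsd
    have hRc2 : (((2 * x * y / r : ℝ) : ℂ) • B) * (((2 * x * y / r : ℝ) : ℂ) • B)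
        = ((4 * x^2 * y^2 / r : ℝ) : ℂ) • B := by
      rw [Matrix.smul_mul, Matrix.mul_smul, hBB, smul_smul, smul_smul]
      congr 1
      have hrC : ((r : ℝ) : ℂ) ≠ 0 := by exact_mod_cast hr
      push_cast
      field_simp
      ring
    have htrB : B.trace = ((r : ℝ) : ℂ) := by
      have : ((r : ℝ) : ℂ) = ((∑ s, vv x y s * vv x y s : ℝ) : ℂ) := by
        rw [sum_vv_vv]; norm_cast; rw [hrdef]; ring
      rw [this]
      simp only [hB, Matrix.trace, Matrix.diag, op]
      push_cast
      rfl
    rw [Rmat, hQsqrt, hM, matSqrt_eq hMpsd hRcpsd hRc2, Matrix.trace_smul, htrB]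
    have hrC : ((r : ℝ) : ℂ) ≠ 0 := by exact_mod_cast hr
    rw [smul_eq_mul]
    push_cast
    field_simp

end WAux

theorem CoA_of_W_state (a b c : ℝ) (ha : 0 ≤ a) (hb : 0 ≤ b) (hc : 0 ≤ c)
    (habc : a + b + c = 1) :
    CoA (rhoAB (psiW a b c)) = 2 * Real.sqrt (a * b) ∧
    CoA (rhoBS (psiW a b c)) = 2 * Real.sqrt (b * c) := by
  have hab : rhoAB (psiW a b c) = WAux.ρW (Real.sqrt a) (Real.sqrt b) (Real.sqrt c) := by
    ext ⟨i, j⟩ ⟨k, l⟩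
    fin_cases i <;> fin_cases j <;> fin_cases k <;> fin_cases l <;>
      simp [rhoAB, psiW, WAux.ρW, WAux.op, WAux.vv, WAux.i00, Matrix.add_apply,
        Matrix.smul_apply, Fin.sum_univ_two, Prod.ext_iff, Complex.conj_ofReal] <;>
      push_cast <;> ring
  have hbs : rhoBS (psiW a b c) = WAux.ρW (Real.sqrt b) (Real.sqrt c) (Real.sqrt a) := by
    ext ⟨i, j⟩ ⟨k, l⟩
    fin_cases i <;> fin_cases j <;> fin_cases k <;> fin_cases l <;>
      simp [rhoBS, psiW, WAux.ρW, WAux.op, WAux.vv, WAux.i00, Matrix.add_apply,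
        Matrix.smul_apply, Fin.sum_univ_two, Prod.ext_iff, Complex.conj_ofReal] <;>
      push_cast <;> ring
  constructor
  · rw [CoA, hab, WAux.trace_ρW_key _ _ _ (Real.sqrt_nonneg a) (Real.sqrt_nonneg b)
      (Real.sqrt_nonneg c), Complex.ofReal_re, Real.sqrt_mul ha]
    ring
  · rw [CoA, hbs, WAux.trace_ρW_key _ _ _ (Real.sqrt_nonneg b) (Real.sqrt_nonneg c)
      (Real.sqrt_nonneg a), Complex.ofReal_re, Real.sqrt_mul hb]
    ring
end
end
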